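/- Under the near point lighting model on the unit sphere with light at E (d = ‖E‖ > 1), and under the parallel lighting model with direction l parallel to E, for any two lit points p and q: B^apl_p < B^apl_q ↔ B^npl_p < B^npl_q (and likewise for = and >). That is, the parallel-lighting intensity and the near-point-lighting intensity induce the same ordering on lit sphere points. -/

import Mathlib

/-- Auxiliary monotonicity: the NPL intensity is strictly increasing in `⟨X,E⟩`. -/
lemma stmt_12_aux (e a b ra rb : ℝ) (he : 0 < e) (ha : 1 < a) (hab : a < b)
    (hrb : 0 < rb) (hr : rb < ra) :
    e * (a - 1) / ra ^ 3 < e * (b - 1) / rb ^ 3 := by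
  have hra : 0 < ra := lt_trans hrb hr
  have h1 : (0:ℝ) < ra ^ 3 := by positivity
  have h2 : (0:ℝ) < rb ^ 3 := by positivity
  rw [div_lt_div_iff₀ h1 h2]
  have hcube : rb ^ 3 < ra ^ 3 := pow_lt_pow_left₀ hr hrb.le (by norm_num)
  have hnum : 0 < e * (a - 1) := by nlinarith
  calc e * (a - 1) * rb ^ 3 < e * (a - 1) * ra ^ 3 :=
        mul_lt_mul_of_pos_left hcube hnum
    _ ≤ e * (b - 1) * ra ^ 3 := by
        apply mul_le_mul_of_nonneg_right _ h1.le
        nlinarith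

theorem stmt_12 (e c : ℝ) (he : 0 < e) (hc : 0 < c)
    (E l Xp Xq : EuclideanSpace ℝ (Fin 3))
    (hd : 1 < ‖E‖) (hl : l = c • E)
    (hXp : ‖Xp‖ = 1) (hXq : ‖Xq‖ = 1)
    (hlitp : 0 < (inner ℝ Xp (E - Xp) : ℝ)) (hlitq : 0 < (inner ℝ Xq (E - Xq) : ℝ))
    (Baplp Baplq Bnplp Bnplq : ℝ)
    (hBaplp : Baplp = (inner ℝ Xp l : ℝ)) (hBaplq : Baplq = (inner ℝ Xq l : ℝ))
    (hBnplp : Bnplp = e * (inner ℝ Xp (E - Xp) : ℝ) / ‖E - Xp‖ ^ 3)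
    (hBnplq : Bnplq = e * (inner ℝ Xq (E - Xq) : ℝ) / ‖E - Xq‖ ^ 3) :
    (Baplp < Baplq ↔ Bnplp < Bnplq) ∧
    (Baplp = Baplq ↔ Bnplp = Bnplq) ∧
    (Baplq < Baplp ↔ Bnplq < Bnplp) := by
  set tp : ℝ := inner ℝ Xp E with htp
  set tq : ℝ := inner ℝ Xq E with htq
  have hinnerp : (inner ℝ Xp (E - Xp) : ℝ) = tp - 1 := by
    rw [inner_sub_right, real_inner_self_eq_norm_sq, hXp]; ring
  have hinnerq : (inner ℝ Xq (E - Xq) : ℝ) = tq - 1 := by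
    rw [inner_sub_right, real_inner_self_eq_norm_sq, hXq]; ring
  have h1p : 1 < tp := by rw [hinnerp] at hlitp; linarith
  have h1q : 1 < tq := by rw [hinnerq] at hlitq; linarith
  have hsqp : ‖E - Xp‖ ^ 2 = ‖E‖ ^ 2 + 1 - 2 * tp := by
    rw [norm_sub_sq_real, hXp, real_inner_comm]; ring
  have hsqq : ‖E - Xq‖ ^ 2 = ‖E‖ ^ 2 + 1 - 2 * tq := by
    rw [norm_sub_sq_real, hXq, real_inner_comm]; ring
  have hcsp : tp ≤ ‖E‖ := by
    calc tp ≤ ‖Xp‖ * ‖E‖ := real_inner_le_norm Xp E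
    _ = ‖E‖ := by rw [hXp, one_mul]
  have hcsq : tq ≤ ‖E‖ := by
    calc tq ≤ ‖Xq‖ * ‖E‖ := real_inner_le_norm Xq E
    _ = ‖E‖ := by rw [hXq, one_mul]
  have hrp : 0 < ‖E - Xp‖ := by
    nlinarith [norm_nonneg (E - Xp), hsqp]
  have hrq : 0 < ‖E - Xq‖ := by
    nlinarith [norm_nonneg (E - Xq), hsqq]
  -- apl intensities are c * t
  have haplp : Baplp = c * tp := by
    rw [hBaplp, hl, inner_smul_right]
  have haplq : Baplq = c * tq := by
    rw [hBaplq, hl, inner_smul_right]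
  -- monotonicity of NPL in t
  have mono : ∀ a b : ℝ, ∀ X Y : EuclideanSpace ℝ (Fin 3), 1 < a → a < b →
      0 < ‖E - Y‖ → ‖E - X‖ ^ 2 = ‖E‖ ^ 2 + 1 - 2 * a →
      ‖E - Y‖ ^ 2 = ‖E‖ ^ 2 + 1 - 2 * b →
      e * (a - 1) / ‖E - X‖ ^ 3 < e * (b - 1) / ‖E - Y‖ ^ 3 := by
    intro a b X Y ha hab hY hX2 hY2
    apply stmt_12_aux e a b _ _ he ha hab hY
    nlinarith [norm_nonneg (E - X), norm_nonneg (E - Y)]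
  have keyp : tp < tq → Bnplp < Bnplq := by
    intro h
    rw [hBnplp, hBnplq, hinnerp, hinnerq]
    exact mono tp tq Xp Xq h1p h hrq hsqp hsqq
  have keyq : tq < tp → Bnplq < Bnplp := by
    intro h
    rw [hBnplp, hBnplq, hinnerp, hinnerq]
    exact mono tq tp Xq Xp h1q h hrp hsqq hsqp
  have keyeq : tp = tq → Bnplp = Bnplq := by
    intro h
    rw [hBnplp, hBnplq, hinnerp, hinnerq, h]
    have h2 : ‖E - Xp‖ ^ 2 = ‖E - Xq‖ ^ 2 := by rw [hsqp, hsqq, h]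
    have h3 : (‖E - Xp‖ - ‖E - Xq‖) * (‖E - Xp‖ + ‖E - Xq‖) = 0 := by
      linear_combination h2
    have h4 : ‖E - Xp‖ = ‖E - Xq‖ := by
      rcases mul_eq_zero.mp h3 with h5 | h5
      · linarith
      · linarith
    rw [h4]
  have iff1 : tp < tq ↔ Bnplp < Bnplq := by
    constructor
    · exact keyp
    · intro h
      by_contra hle
      rcases eq_or_lt_of_le (not_lt.mp hle) with heq | hlt
      · exact absurd (keyeq heq.symm) (ne_of_lt h)
      · exact absurd h (not_lt.mpr (le_of_lt (keyq hlt)))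
  have iff2 : tq < tp ↔ Bnplq < Bnplp := by
    constructor
    · exact keyq
    · intro h
      by_contra hle
      rcases eq_or_lt_of_le (not_lt.mp hle) with heq | hlt
      · exact absurd (keyeq heq) (ne_of_lt h).symm
      · exact absurd h (not_lt.mpr (le_of_lt (keyp hlt)))
  refine ⟨?_, ?_, ?_⟩
  · rw [haplp, haplq, mul_lt_mul_iff_right₀ hc]; exact iff1
  · rw [haplp, haplq]
    constructor
    · intro h
      exact keyeq (mul_left_cancel₀ (ne_of_gt hc) h)
    · intro h
      rcases lt_trichotomy tp tq with hlt | heq | hgt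
      · exact absurd (iff1.mp hlt) (by rw [h]; exact lt_irrefl _)
      · rw [heq]
      · exact absurd (iff2.mp hgt) (by rw [h]; exact lt_irrefl _)
  · rw [haplp, haplq, mul_lt_mul_iff_right₀ hc]; exact iff2
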